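/- Let Q ⊆ {0,1}^p, let f : ℝ → ℝ be convex with f(0) = 0, assume that for every i ∈ [p] there exists z ∈ Q with z_i = 1, and assume the graph G_Q is connected. Let F ⊆ ℝ^p be any finite set such that conv(Q \ {0}) = conv(Q) ∩ ⋂_{π ∈ F} {z : π^⊤ z ≥ 1}. Then the closure of the convex hull of Z_Q equals {(z, β, t) ∈ [0,1]^p × ℝ^p × ℝ : z ∈ conv(Q), t ≥ f(𝟙^⊤β), and t ≥ (π^⊤ z)·f(𝟙^⊤β / (π^⊤ z)) for all π ∈ F}, where perspective values at π^⊤ z = 0 are interpreted via the limit convention. -/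

import Mathlib

open Filter

/-- The perspective value `w·f(x/w)`, valued in `EReal`, where at `w ≤ 0` (only `w = 0` is ever
used) the value is interpreted via the limit convention `0·f(x/0) = lim_{w→0⁺} w·f(x/w)`. -/
noncomputable def persp (f : ℝ → ℝ) (x w : ℝ) : EReal :=
  if 0 < w then ((w * f (x / w) : ℝ) : EReal)
  else Filter.limsup (fun v : ℝ => ((v * f (x / v) : ℝ) : EReal)) (nhdsWithin 0 (Set.Ioi 0))

/-- The set `Z_Q = {(z,β,t) : z ∈ Q, f(𝟙ᵀβ) ≤ t, βᵢ(1-zᵢ) = 0 ∀i}`. -/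
def ZQ (p : ℕ) (Q : Set (Fin p → ℝ)) (f : ℝ → ℝ) :
    Set ((Fin p → ℝ) × (Fin p → ℝ) × ℝ) :=
  {x | x.1 ∈ Q ∧ f (∑ i, x.2.1 i) ≤ x.2.2 ∧ ∀ i, x.2.1 i * (1 - x.1 i) = 0}

/-- The graph `G_Q` on `[p]` with an edge `{i,j}`, `i ≠ j`, whenever some `z ∈ Q`
has `z_i = z_j = 1`. -/
def GQ (p : ℕ) (Q : Set (Fin p → ℝ)) : SimpleGraph (Fin p) :=
  SimpleGraph.fromRel (fun i j => ∃ z ∈ Q, z i = 1 ∧ z j = 1)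



section basic
variable {f : ℝ → ℝ}

/-- 1D subgradient existence. -/
lemma exists_subgrad (hf : ConvexOn ℝ Set.univ f) (x₀ : ℝ) :
    ∃ a : ℝ, ∀ u : ℝ, a * u + (f x₀ - a * x₀) ≤ f u := by
  have hslope : ∀ u < x₀, ∀ v, x₀ < v →
      (f x₀ - f u) / (x₀ - u) ≤ (f v - f x₀) / (v - x₀) := by
    intro u hu v hv
    have := hf.slope_mono_adjacent (Set.mem_univ u) (Set.mem_univ v) hu hv
    simpa [slope_def_field] using this
  set S : Set ℝ := (fun u => (f x₀ - f u) / (x₀ - u)) '' Set.Iio x₀ with hS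
  have hne : S.Nonempty := ⟨_, ⟨x₀ - 1, by simp, rfl⟩⟩
  have hbdd : BddAbove S := by
    refine ⟨(f (x₀ + 1) - f x₀) / (x₀ + 1 - x₀), ?_⟩
    rintro _ ⟨u, hu, rfl⟩
    exact hslope u hu _ (by linarith)
  refine ⟨sSup S, fun u => ?_⟩
  rcases lt_trichotomy u x₀ with h | h | h
  · have h1 : (f x₀ - f u) / (x₀ - u) ≤ sSup S := le_csSup hbdd ⟨u, h, rfl⟩
    have h2 : 0 < x₀ - u := by linarith
    rw [div_le_iff₀ h2] at h1
    nlinarith [h1]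
  · subst h; linarith
  · have h1 : sSup S ≤ (f u - f x₀) / (u - x₀) := by
      refine csSup_le hne ?_
      rintro _ ⟨v, hv, rfl⟩
      exact hslope v hv u h
    have h2 : 0 < u - x₀ := by linarith
    rw [le_div_iff₀ h2] at h1
    nlinarith [h1]

lemma fcont (hf : ConvexOn ℝ Set.univ f) : Continuous f := by
  rw [← continuousOn_univ]
  exact hf.continuousOn isOpen_univ

/-- antitone of w ↦ w f(σ/w) on (0,∞). -/
lemma persp_anti (hf : ConvexOn ℝ Set.univ f) (hf0 : f 0 = 0) {σ a b : ℝ}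
    (ha : 0 < a) (hab : a ≤ b) : b * f (σ / b) ≤ a * f (σ / a) := by
  have hb : 0 < b := lt_of_lt_of_le ha hab
  have key : f (σ / b) ≤ (a / b) * f (σ / a) := by
    have h1 : σ / b = (a / b) • (σ / a) + (1 - a / b) • (0 : ℝ) := by
      rw [smul_eq_mul, smul_eq_mul, mul_zero, add_zero, div_mul_div_comm, mul_comm a σ,
        mul_div_mul_right _ _ ha.ne']
    rw [h1]
    have hab1 : a / b ≤ 1 := (div_le_one hb).2 hab
    have := hf.2 (Set.mem_univ (σ / a)) (Set.mem_univ (0:ℝ))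
      (by positivity : (0:ℝ) ≤ a / b) (by linarith : (0:ℝ) ≤ 1 - a / b) (by ring)
    simpa [hf0] using this
  calc b * f (σ / b) ≤ b * ((a / b) * f (σ / a)) := by
        exact mul_le_mul_of_nonneg_left key hb.le
    _ = a * f (σ / a) := by field_simp

end basic


section persp
variable {f : ℝ → ℝ}

lemma persp_of_pos {σ w : ℝ} (hw : 0 < w) : persp f σ w = ((w * f (σ / w) : ℝ) : EReal) :=
  if_pos hw

lemma persp_zero_le_iff (hf : ConvexOn ℝ Set.univ f) (hf0 : f 0 = 0) {σ t : ℝ} :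
    persp f σ 0 ≤ (t : EReal) ↔ ∀ v : ℝ, 0 < v → v * f (σ / v) ≤ t := by
  have hne : (nhdsWithin (0:ℝ) (Set.Ioi 0)).NeBot := nhdsGT_neBot 0
  rw [persp, if_neg (lt_irrefl 0)]
  constructor
  · intro h v hv
    have hev : ∀ᶠ u in nhdsWithin (0:ℝ) (Set.Ioi 0),
        ((v * f (σ / v) : ℝ) : EReal) ≤ ((u * f (σ / u) : ℝ) : EReal) := by
      filter_upwards [Ioo_mem_nhdsGT_of_mem (Set.mem_Ico.2 ⟨le_refl (0:ℝ), hv⟩)] with u hu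
      exact_mod_cast persp_anti hf hf0 hu.1 hu.2.le
    have h1 : ((v * f (σ / v) : ℝ) : EReal) ≤
        Filter.liminf (fun u : ℝ => ((u * f (σ / u) : ℝ) : EReal)) (nhdsWithin 0 (Set.Ioi 0)) :=
      Filter.le_liminf_of_le (by isBoundedDefault) hev
    have h2 := Filter.liminf_le_limsup (f := nhdsWithin (0:ℝ) (Set.Ioi 0))
      (u := fun u : ℝ => ((u * f (σ / u) : ℝ) : EReal))
    exact_mod_cast le_trans h1 (le_trans h2 h)
  · intro h
    refine Filter.limsup_le_of_le (by isBoundedDefault) ?_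
    filter_upwards [self_mem_nhdsWithin] with u hu
    exact_mod_cast h u hu

lemma persp_le_iff (hf : ConvexOn ℝ Set.univ f) (hf0 : f 0 = 0) {σ w t : ℝ} (hw : 0 ≤ w) :
    persp f σ w ≤ (t : EReal) ↔
      ∀ a b : ℝ, (∀ u, a * u + b ≤ f u) → a * σ + b * w ≤ t := by
  rcases hw.lt_or_eq with hw' | hw'
  · rw [persp_of_pos hw', EReal.coe_le_coe_iff]
    constructor
    · intro h a b hab
      have h1 : a * (σ / w) + b ≤ f (σ / w) := hab _
      have h2 : w * (a * (σ / w) + b) ≤ w * f (σ / w) :=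
        mul_le_mul_of_nonneg_left h1 hw'.le
      calc a * σ + b * w = w * (a * (σ / w) + b) := by field_simp
        _ ≤ w * f (σ / w) := h2
        _ ≤ t := h
    · intro h
      obtain ⟨a, ha⟩ := exists_subgrad hf (σ / w)
      have := h a (f (σ / w) - a * (σ / w)) ha
      calc w * f (σ / w) = a * σ + (f (σ / w) - a * (σ / w)) * w := by field_simp; ring
        _ ≤ t := this
  · rw [← hw', persp_zero_le_iff hf hf0]
    constructor
    · intro h a b hab
      have key : ∀ v : ℝ, 0 < v → a * σ ≤ t - b * v := by
        intro v hv
        have h1 : a * (σ / v) + b ≤ f (σ / v) := hab _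
        have h2 : v * (a * (σ / v) + b) ≤ v * f (σ / v) :=
          mul_le_mul_of_nonneg_left h1 hv.le
        have h3 : a * σ + b * v ≤ v * f (σ / v) := by
          calc a * σ + b * v = v * (a * (σ / v) + b) := by field_simp
            _ ≤ v * f (σ / v) := h2
        linarith [h v hv]
      have htend : Filter.Tendsto (fun v : ℝ => t - b * v) (nhdsWithin 0 (Set.Ioi 0)) (nhds t) := by
        have : Filter.Tendsto (fun v : ℝ => t - b * v) (nhds 0) (nhds (t - b * 0)) :=
          Filter.Tendsto.const_sub t ((continuous_mul_left b).tendsto 0)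
        simpa using this.mono_left nhdsWithin_le_nhds
      have hne : (nhdsWithin (0:ℝ) (Set.Ioi 0)).NeBot := nhdsGT_neBot 0
      have := ge_of_tendsto htend (by
        filter_upwards [self_mem_nhdsWithin] with v hv
        exact key v hv)
      simpa using this
    · intro h v hv
      obtain ⟨a, ha⟩ := exists_subgrad hf (σ / v)
      have hb : f (σ / v) - a * (σ / v) ≤ 0 := by
        have := ha 0
        simpa [hf0] using this
      have h1 := h a (f (σ / v) - a * (σ / v)) ha
      have h2 : v * f (σ / v) = a * σ + (f (σ / v) - a * (σ / v)) * v := by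
        field_simp; ring
      nlinarith [h1, hb, hv]
end persp



section main
variable {p : ℕ} {Q : Set (Fin p → ℝ)} {f : ℝ → ℝ} {F : Finset (Fin p → ℝ)}

lemma Qfin (hQbin : Q ⊆ {z | ∀ i, z i = 0 ∨ z i = 1}) : Q.Finite := by
  have : Q ⊆ Set.pi Set.univ (fun _ : Fin p => ({0, 1} : Set ℝ)) := by
    intro z hz i _
    rcases hQbin hz i with h | h <;> simp [h]
  exact Set.Finite.subset (Set.Finite.pi fun _ => (Set.finite_singleton _).insert _) this

lemma conv_mem_box (hQbin : Q ⊆ {z | ∀ i, z i = 0 ∨ z i = 1}) {z : Fin p → ℝ}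
    (hz : z ∈ convexHull ℝ Q) (i : Fin p) : z i ∈ Set.Icc (0:ℝ) 1 := by
  have hsub : convexHull ℝ Q ⊆ {z : Fin p → ℝ | z i ∈ Set.Icc (0:ℝ) 1} := by
    apply convexHull_min
    · intro w hw
      rcases hQbin hw i with h | h <;> simp [h]
    · intro a ha b hb α β hα hβ hαβ
      have := convex_Icc (0:ℝ) 1 ha hb hα hβ hαβ
      simpa using this
  exact hsub hz

/-- On `conv Q`, the functionals `πᵀ·`, `π ∈ F`, are nonnegative. -/
lemma conv_pi_nonneg (hQbin : Q ⊆ {z | ∀ i, z i = 0 ∨ z i = 1})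
    (hF : convexHull ℝ (Q \ {0}) =
        convexHull ℝ Q ∩ ⋂ π ∈ F, {z : Fin p → ℝ | 1 ≤ ∑ i, π i * z i})
    {π : Fin p → ℝ} (hπ : π ∈ F) {z : Fin p → ℝ} (hz : z ∈ convexHull ℝ Q) :
    0 ≤ ∑ i, π i * z i := by
  have hsub : convexHull ℝ Q ⊆ {z : Fin p → ℝ | 0 ≤ ∑ i, π i * z i} := by
    apply convexHull_min
    · intro w hw
      by_cases h0 : w = 0
      · simp [h0]
      · have : w ∈ convexHull ℝ (Q \ {0}) := subset_convexHull ℝ _ ⟨hw, h0⟩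
        rw [hF] at this
        have h1 := this.2
        simp only [Set.mem_iInter] at h1
        have := h1 π hπ
        simp only [Set.mem_setOf_eq] at this ⊢
        linarith
    · intro a ha b hb α β hα hβ hαβ
      simp only [Set.mem_setOf_eq] at ha hb ⊢
      have heq : ∑ i, π i * (α • a + β • b) i = α * ∑ i, π i * a i + β * ∑ i, π i * b i := by
        simp only [Pi.add_apply, Pi.smul_apply, smul_eq_mul, Finset.mul_sum,
          ← Finset.sum_add_distrib]
        apply Finset.sum_congr rfl; intro i _; ring
      rw [heq]
      positivity
  exact hsub hz

/-- `πᵀz ≥ 1` for nonzero `z ∈ Q`. -/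
lemma pi_one_le (hF : convexHull ℝ (Q \ {0}) =
        convexHull ℝ Q ∩ ⋂ π ∈ F, {z : Fin p → ℝ | 1 ≤ ∑ i, π i * z i})
    {π : Fin p → ℝ} (hπ : π ∈ F) {z : Fin p → ℝ} (hz : z ∈ Q) (h0 : z ≠ 0) :
    1 ≤ ∑ i, π i * z i := by
  have : z ∈ convexHull ℝ (Q \ {0}) := subset_convexHull ℝ _ ⟨hz, h0⟩
  rw [hF] at this
  have h1 := this.2
  simp only [Set.mem_iInter] at h1
  exact h1 π hπ

end main

section dir1
variable {p : ℕ} {Q : Set (Fin p → ℝ)} {f : ℝ → ℝ} {F : Finset (Fin p → ℝ)}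

lemma sum_combo (a b : Fin p → ℝ) (α β : ℝ) :
    ∑ i, (α • a + β • b) i = α * ∑ i, a i + β * ∑ i, b i := by
  simp only [Pi.add_apply, Pi.smul_apply, smul_eq_mul, Finset.mul_sum,
    ← Finset.sum_add_distrib]

lemma sum_pi_combo (π a b : Fin p → ℝ) (α β : ℝ) :
    ∑ i, π i * (α • a + β • b) i = α * (∑ i, π i * a i) + β * (∑ i, π i * b i) := by
  simp only [Pi.add_apply, Pi.smul_apply, smul_eq_mul, Finset.mul_sum,
    ← Finset.sum_add_distrib]
  apply Finset.sum_congr rfl; intro i _; ring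

lemma dir1 (hQbin : Q ⊆ {z | ∀ i, z i = 0 ∨ z i = 1})
    (hf : ConvexOn ℝ Set.univ f) (hf0 : f 0 = 0)
    (hF : convexHull ℝ (Q \ {0}) =
        convexHull ℝ Q ∩ ⋂ π ∈ F, {z : Fin p → ℝ | 1 ≤ ∑ i, π i * z i}) :
    closure (convexHull ℝ (ZQ p Q f)) ⊆
      {x : (Fin p → ℝ) × (Fin p → ℝ) × ℝ |
        (∀ i, x.1 i ∈ Set.Icc (0 : ℝ) 1) ∧ x.1 ∈ convexHull ℝ Q ∧
        f (∑ i, x.2.1 i) ≤ x.2.2 ∧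
        ∀ π ∈ F, persp f (∑ i, x.2.1 i) (∑ i, π i * x.1 i) ≤ (x.2.2 : EReal)} := by
  -- A : z-part in conv Q
  have hA : closure (convexHull ℝ (ZQ p Q f)) ⊆
      {x : (Fin p → ℝ) × (Fin p → ℝ) × ℝ | x.1 ∈ convexHull ℝ Q} := by
    apply closure_minimal
    · apply convexHull_min
      · exact fun x hx => subset_convexHull ℝ Q hx.1
      · intro x hx y hy α β hα hβ hαβ
        exact (convex_convexHull ℝ Q) hx hy hα hβ hαβ
    · exact (Set.Finite.isClosed_convexHull ℝ (Qfin hQbin)).preimage continuous_fst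
  -- B : epigraph condition
  have hB : closure (convexHull ℝ (ZQ p Q f)) ⊆
      {x : (Fin p → ℝ) × (Fin p → ℝ) × ℝ | f (∑ i, x.2.1 i) ≤ x.2.2} := by
    apply closure_minimal
    · apply convexHull_min
      · exact fun x hx => hx.2.1
      · intro x hx y hy α β hα hβ hαβ
        simp only [Set.mem_setOf_eq] at hx hy ⊢
        have hsum : ∑ i, (α • x + β • y).2.1 i = α * ∑ i, x.2.1 i + β * ∑ i, y.2.1 i := by
          simpa using sum_combo x.2.1 y.2.1 α β
        rw [hsum]
        have hcvx := hf.2 (Set.mem_univ (∑ i, x.2.1 i)) (Set.mem_univ (∑ i, y.2.1 i)) hα hβ hαβ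
        simp only [smul_eq_mul] at hcvx
        have : (α • x + β • y).2.2 = α * x.2.2 + β * y.2.2 := by simp
        rw [this]
        calc f (α * ∑ i, x.2.1 i + β * ∑ i, y.2.1 i)
            ≤ α * f (∑ i, x.2.1 i) + β * f (∑ i, y.2.1 i) := hcvx
          _ ≤ α * x.2.2 + β * y.2.2 := by
              apply add_le_add <;> apply mul_le_mul_of_nonneg_left <;> assumption
    · apply isClosed_le
      · apply (fcont hf).comp
        exact continuous_finset_sum _ fun i _ =>
          (continuous_apply i).comp (continuous_fst.comp continuous_snd)
      · exact continuous_snd.comp continuous_snd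
  -- C : linear minorant inequalities
  have hC : ∀ π ∈ F, ∀ a b : ℝ, (∀ u, a * u + b ≤ f u) →
      closure (convexHull ℝ (ZQ p Q f)) ⊆
      {x : (Fin p → ℝ) × (Fin p → ℝ) × ℝ |
        a * (∑ i, x.2.1 i) + b * (∑ i, π i * x.1 i) ≤ x.2.2} := by
    intro π hπ a b hab
    apply closure_minimal
    · apply convexHull_min
      · rintro ⟨z, β, t⟩ ⟨hzQ, hft, hsupp⟩
        simp only [Set.mem_setOf_eq]
        by_cases h0 : z = 0
        · have hβ0 : ∀ i, β i = 0 := by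
            intro i
            have := hsupp i
            simp only [h0] at this
            simpa using this
          have h1 : ∑ i, β i = 0 := Finset.sum_eq_zero fun i _ => hβ0 i
          have h2 : ∑ i, π i * z i = 0 := by
            subst h0; simp
          simp only [h1, h2, mul_zero, add_zero]
          have : f 0 ≤ t := by simpa [h1] using hft
          simpa [hf0] using this
        · set σ := ∑ i, β i with hσ
          set w := ∑ i, π i * z i with hwdef
          have hw1 : 1 ≤ w := pi_one_le hF hπ hzQ h0
          have hwpos : 0 < w := lt_of_lt_of_le one_pos hw1
          have h1 : a * σ + b * w ≤ w * f (σ / w) := by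
            have := mul_le_mul_of_nonneg_left (hab (σ / w)) hwpos.le
            calc a * σ + b * w = w * (a * (σ / w) + b) := by field_simp
              _ ≤ w * f (σ / w) := this
          have h2 : w * f (σ / w) ≤ 1 * f (σ / 1) := persp_anti hf hf0 one_pos hw1
          simp only [one_mul, div_one] at h2
          linarith
      · intro x hx y hy α β hα hβ hαβ
        simp only [Set.mem_setOf_eq] at hx hy ⊢
        have hs1 : ∑ i, (α • x + β • y).2.1 i = α * ∑ i, x.2.1 i + β * ∑ i, y.2.1 i := by
          simpa using sum_combo x.2.1 y.2.1 α β
        have hs2 : ∑ i, π i * (α • x + β • y).1 i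
            = α * (∑ i, π i * x.1 i) + β * (∑ i, π i * y.1 i) := by
          simpa using sum_pi_combo π x.1 y.1 α β
        have hs3 : (α • x + β • y).2.2 = α * x.2.2 + β * y.2.2 := by simp
        rw [hs1, hs2, hs3]
        nlinarith [hx, hy]
    · apply isClosed_le
      · apply Continuous.add
        · exact continuous_const.mul (continuous_finset_sum _ fun i _ =>
            (continuous_apply i).comp (continuous_fst.comp continuous_snd))
        · exact continuous_const.mul (continuous_finset_sum _ fun i _ =>
            continuous_const.mul ((continuous_apply i).comp continuous_fst))
      · exact continuous_snd.comp continuous_snd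
  -- assemble
  intro x hx
  have hxA := hA hx
  simp only [Set.mem_setOf_eq] at hxA
  refine ⟨fun i => conv_mem_box hQbin hxA i, hxA, hB hx, ?_⟩
  intro π hπ
  have hw0 : 0 ≤ ∑ i, π i * x.1 i := conv_pi_nonneg hQbin hF hπ hxA
  rw [persp_le_iff hf hf0 hw0]
  intro a b hab
  exact hC π hπ a b hab hx
end dir1

section transport
variable {p : ℕ} {Q : Set (Fin p → ℝ)} {f : ℝ → ℝ}

/-- `a·(e_i - e_j)`. -/
def eij (i j : Fin p) (a : ℝ) : Fin p → ℝ :=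
  fun k => (if k = i then a else 0) - (if k = j then a else 0)

lemma transport_edge (hf0 : f 0 = 0) (hQne : Q.Nonempty) {i j : Fin p}
    (w : (GQ p Q).Walk i j) : ∀ a : ℝ,
    ∃ ζ ∈ convexHull ℝ Q, ((ζ, eij i j a, (0:ℝ)) :
      (Fin p → ℝ) × (Fin p → ℝ) × ℝ) ∈ convexHull ℝ (ZQ p Q f) := by
  induction w with
  | @nil i' =>
    intro a
    obtain ⟨z₀, hz₀⟩ := hQne
    refine ⟨z₀, subset_convexHull ℝ Q hz₀, ?_⟩
    have heq : eij (p := p) i' i' a = 0 := by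
      funext k; simp [eij]
    rw [heq]
    apply subset_convexHull
    refine ⟨hz₀, by simp [hf0], fun m => by simp⟩
  | @cons i k j h w ih =>
    intro a
    obtain ⟨ζ', hζ', hmem'⟩ := ih (2 * a)
    rw [GQ, SimpleGraph.fromRel_adj] at h
    obtain ⟨hik, hw⟩ := h
    have hwit : ∃ z ∈ Q, z i = 1 ∧ z k = 1 := by
      rcases hw with ⟨z, hz, h1, h2⟩ | ⟨z, hz, h1, h2⟩
      exacts [⟨z, hz, h1, h2⟩, ⟨z, hz, h2, h1⟩]
    obtain ⟨z', hz'Q, hz'i, hz'k⟩ := hwit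
    have hP : ((z', eij i k (2 * a), (0:ℝ)) :
        (Fin p → ℝ) × (Fin p → ℝ) × ℝ) ∈ ZQ p Q f := by
      refine ⟨hz'Q, ?_, ?_⟩
      · have : ∑ m, eij i k (2 * a) m = 0 := by
          simp [eij, Finset.sum_sub_distrib]
        simpa [this, hf0]
      · intro m
        rcases eq_or_ne m i with rfl | hmi
        · simp [eij, hz'i, hik]
        · rcases eq_or_ne m k with rfl | hmk
          · simp [eij, hz'k, hik, hmi]
          · simp [eij, hmi, hmk]
    refine ⟨(1/2 : ℝ) • z' + (1/2 : ℝ) • ζ', ?_, ?_⟩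
    · exact (convex_convexHull ℝ Q) (subset_convexHull ℝ Q hz'Q) hζ'
        (by norm_num) (by norm_num) (by norm_num)
    · have hcomb := (convex_convexHull ℝ (ZQ p Q f))
        (subset_convexHull ℝ _ hP) hmem'
        (by norm_num : (0:ℝ) ≤ 1/2) (by norm_num : (0:ℝ) ≤ 1/2) (by norm_num)
      convert hcomb using 1
      refine Prod.ext ?_ (Prod.ext ?_ ?_)
      · simp
      · funext m
        simp only [Prod.fst_add, Prod.snd_add, Prod.smul_fst, Prod.smul_snd,
          Pi.add_apply, Pi.smul_apply, smul_eq_mul, eij]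
        split_ifs <;> ring
      · simp

lemma transport (hf0 : f 0 = 0) (hQne : Q.Nonempty) (hconn : (GQ p Q).Connected)
    (v : Fin p → ℝ) (hv : ∑ i, v i = 0) :
    ∃ ζ ∈ convexHull ℝ Q, ((ζ, v, (0:ℝ)) :
      (Fin p → ℝ) × (Fin p → ℝ) × ℝ) ∈ convexHull ℝ (ZQ p Q f) := by
  have hnp : Nonempty (Fin p) := hconn.nonempty
  obtain ⟨i₀⟩ := hnp
  set u : Finset (Fin p) := Finset.univ.erase i₀ with hu
  by_cases hune : u.Nonempty
  · set m : ℝ := (u.card : ℝ) with hm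
    have hmpos : 0 < m := by
      simp only [hm]
      exact_mod_cast Finset.card_pos.2 hune
    -- for each i ∈ u, a transported point
    have hpts : ∀ i : Fin p, ∃ ζ ∈ convexHull ℝ Q,
        ((ζ, eij i i₀ (m * v i), (0:ℝ)) :
          (Fin p → ℝ) × (Fin p → ℝ) × ℝ) ∈ convexHull ℝ (ZQ p Q f) := by
      intro i
      obtain ⟨w⟩ := hconn.preconnected i i₀
      exact transport_edge hf0 hQne w (m * v i)
    choose ζi hζi hζmem using hpts
    have hwnn : ∀ i ∈ u, (0:ℝ) ≤ 1 / m := fun i _ => by positivity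
    have hwsum : ∑ _i ∈ u, (1 / m : ℝ) = 1 := by
      simp [hm]
      field_simp
    refine ⟨∑ i ∈ u, (1/m : ℝ) • ζi i, ?_, ?_⟩
    · exact (convex_convexHull ℝ Q).sum_mem hwnn hwsum fun i _ => hζi i
    · have hmem := (convex_convexHull ℝ (ZQ p Q f)).sum_mem (t := u)
        (w := fun _ => (1/m : ℝ))
        (z := fun i => ((ζi i, eij i i₀ (m * v i), (0:ℝ)) :
          (Fin p → ℝ) × (Fin p → ℝ) × ℝ))
        hwnn hwsum (fun i _ => hζmem i)
      convert hmem using 1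
      refine Prod.ext ?_ (Prod.ext ?_ ?_)
      · simp [Prod.fst_sum]
      · funext k
        have h1 : (∑ i ∈ u, (1/m : ℝ) • ((ζi i, eij i i₀ (m * v i), (0:ℝ)) :
            (Fin p → ℝ) × (Fin p → ℝ) × ℝ)).2.1 k
            = ∑ i ∈ u, (1/m) * eij i i₀ (m * v i) k := by
          rw [Prod.snd_sum, Prod.fst_sum]
          simp
        rw [h1]
        have h2 : ∀ i ∈ u, (1/m : ℝ) * eij i i₀ (m * v i) k = eij i i₀ (v i) k := by
          intro i _
          simp only [eij]
          split_ifs <;> field_simp <;> ring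
        rw [Finset.sum_congr rfl h2]
        -- now compute the sum of eij's
        simp only [eij, Finset.sum_sub_distrib]
        rcases eq_or_ne k i₀ with rfl | hk
        · have ha : ∑ i ∈ u, (if k = i then v i else 0) = 0 := by
            apply Finset.sum_eq_zero
            intro i hi
            have : k ≠ i := fun h => (Finset.mem_erase.1 hi).1 h.symm
            simp [this]
          have hb : ∑ i ∈ u, (if k = k then v i else 0 : ℝ) = ∑ i ∈ u, v i := by
            simp
          have hc : v k + ∑ i ∈ u, v i = 0 := by
            rw [← hv, hu]
            exact (Finset.add_sum_erase Finset.univ v (Finset.mem_univ k)).symm ▸ rfl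
          rw [ha, hb]
          linarith
        · have ha : ∑ i ∈ u, (if k = i then v i else 0) = v k := by
            rw [Finset.sum_ite_eq u k v]
            simp [hu, hk]
          have hb : ∑ i ∈ u, (if k = i₀ then v i else 0 : ℝ) = 0 := by
            simp [hk]
          rw [ha, hb, sub_zero]
      · rw [Prod.snd_sum, Prod.snd_sum]
        simp
  · -- p = 1 case : v = 0
    have hv0 : v = 0 := by
      funext k
      have hk : k = i₀ := by
        by_contra hne
        exact hune ⟨k, Finset.mem_erase.2 ⟨hne, Finset.mem_univ k⟩⟩
      have : ∑ i, v i = v i₀ := by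
        rw [← Finset.add_sum_erase Finset.univ v (Finset.mem_univ i₀), ← hu]
        simp [Finset.not_nonempty_iff_eq_empty.1 hune]
      rw [hk]
      have := hv ▸ this
      simp [← this]
    obtain ⟨z₀, hz₀⟩ := hQne
    refine ⟨z₀, subset_convexHull ℝ Q hz₀, ?_⟩
    rw [hv0]
    apply subset_convexHull
    exact ⟨hz₀, by simp [hf0], fun m => by simp⟩
  end transport

section key
variable {p : ℕ} {Q : Set (Fin p → ℝ)} {f : ℝ → ℝ}

lemma key_lemma (hQbin : Q ⊆ {z | ∀ i, z i = 0 ∨ z i = 1})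
    (hf0 : f 0 = 0)
    (hQne : Q.Nonempty) (hconn : (GQ p Q).Connected)
    {y : Fin p → ℝ} (hy : y ∈ convexHull ℝ (Q \ {0}))
    (β : Fin p → ℝ) (u : ℝ) {ε : ℝ} (hε : 0 < ε) (hε1 : ε < 1)
    (hu : (1 - ε) * f ((∑ i, β i) / (1 - ε)) ≤ u) :
    ∃ ζ ∈ convexHull ℝ Q,
      (((1 - ε) • y + ε • ζ, β, u) : (Fin p → ℝ) × (Fin p → ℝ) × ℝ)
        ∈ convexHull ℝ (ZQ p Q f) := by
  have hnp : Nonempty (Fin p) := hconn.nonempty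
  have h1ε : (0:ℝ) < 1 - ε := by linarith
  set σ : ℝ := ∑ i, β i with hσ
  rw [convexHull_eq] at hy
  obtain ⟨ι, s, ν, g, hν0, hν1, hg, hcm⟩ := hy
  rw [Finset.centerMass_eq_of_sum_1 _ _ hν1] at hcm
  -- choose a support coordinate for each k
  have hik : ∀ k : ι, ∃ i, k ∈ s → g k i = 1 := by
    intro k
    by_cases hk : k ∈ s
    · obtain ⟨hgQ, hg0⟩ := hg k hk
      have : ∃ i, g k i ≠ 0 := by
        by_contra hcon
        push_neg at hcon
        exact hg0 (funext fun i => hcon i)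
      obtain ⟨i, hi⟩ := this
      rcases hQbin hgQ i with h | h
      · exact absurd h hi
      · exact ⟨i, fun _ => h⟩
    · exact ⟨Classical.arbitrary _, fun h => absurd h hk⟩
  choose ik hik1 using hik
  -- main rows
  set row : ι → (Fin p → ℝ) × (Fin p → ℝ) × ℝ :=
    fun k => (g k, (σ / (1 - ε)) • (Pi.single (ik k) (1:ℝ) : Fin p → ℝ), u / (1 - ε)) with hrow
  have hfineq : f (σ / (1 - ε)) ≤ u / (1 - ε) := by
    rw [le_div_iff₀ h1ε]
    linarith
  have hrowZ : ∀ k ∈ s, row k ∈ ZQ p Q f := by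
    intro k hk
    refine ⟨(hg k hk).1, ?_, ?_⟩
    · show f (∑ i, ((σ / (1 - ε)) • (Pi.single (ik k) (1:ℝ) : Fin p → ℝ)) i) ≤ u / (1 - ε)
      have hsum : ∑ i, ((σ / (1 - ε)) • (Pi.single (ik k) (1:ℝ) : Fin p → ℝ)) i
          = σ / (1 - ε) := by
        simp [Pi.single_apply]
      rw [hsum]
      exact hfineq
    · intro i
      rcases eq_or_ne i (ik k) with rfl | hne
      · simp [hrow, hik1 k hk]
      · simp [hrow, Pi.single_eq_of_ne hne]
  set bbar : Fin p → ℝ := fun i => ∑ k ∈ s, ν k * ((Pi.single (ik k) (1:ℝ) : Fin p → ℝ) i) with hbbar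
  have hbbar_sum : ∑ i, bbar i = 1 := by
    rw [hbbar, Finset.sum_comm]
    have hper : ∀ k ∈ s, ∑ i, ν k * (Pi.single (ik k) (1:ℝ) : Fin p → ℝ) i = ν k := by
      intro k _
      rw [← Finset.mul_sum]
      have h1 : ∑ i, (Pi.single (ik k) (1:ℝ) : Fin p → ℝ) i = 1 := by
        simp [Pi.single_apply]
      rw [h1, mul_one]
    rw [Finset.sum_congr rfl hper, hν1]
  -- the main combination
  have hM : (((y : Fin p → ℝ), (σ / (1 - ε)) • bbar, u / (1 - ε)) :
      (Fin p → ℝ) × (Fin p → ℝ) × ℝ) ∈ convexHull ℝ (ZQ p Q f) := by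
    have hmem := (convex_convexHull ℝ (ZQ p Q f)).sum_mem (t := s) (w := ν)
      (z := row) hν0 hν1 (fun k hk => subset_convexHull ℝ _ (hrowZ k hk))
    convert hmem using 1
    refine Prod.ext ?_ (Prod.ext ?_ ?_)
    · rw [Prod.fst_sum]
      simp only [hrow, Prod.smul_fst]
      exact hcm.symm
    · funext i
      rw [Prod.snd_sum, Prod.fst_sum]
      simp only [hrow, Prod.smul_snd, Prod.smul_fst, Finset.sum_apply, Pi.smul_apply,
        smul_eq_mul, hbbar, Finset.mul_sum]
      apply Finset.sum_congr rfl
      intro k _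
      ring
    · rw [Prod.snd_sum, Prod.snd_sum]
      simp only [hrow, Prod.smul_snd, smul_eq_mul, ← Finset.sum_mul, hν1, one_mul]
  -- the transport part
  set v : Fin p → ℝ := ε⁻¹ • (β - σ • bbar) with hv
  have hvsum : ∑ i, v i = 0 := by
    simp only [hv, Pi.smul_apply, Pi.sub_apply, smul_eq_mul]
    rw [← Finset.mul_sum, Finset.sum_sub_distrib, ← hσ, ← Finset.mul_sum, hbbar_sum]
    simp
  obtain ⟨ζ, hζ, hG⟩ := transport hf0 hQne hconn v hvsum
  refine ⟨ζ, hζ, ?_⟩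
  have hcomb := (convex_convexHull ℝ (ZQ p Q f)) hM hG h1ε.le hε.le (by ring)
  convert hcomb using 1
  refine Prod.ext ?_ (Prod.ext ?_ ?_)
  · simp
  · funext i
    simp only [Prod.fst_add, Prod.snd_add, Prod.smul_fst, Prod.smul_snd, Pi.add_apply,
      Pi.smul_apply, Pi.sub_apply, smul_eq_mul, hv]
    field_simp
    ring
  · simp only [Prod.snd_add, Prod.smul_snd, smul_eq_mul]
    field_simp
    ring

end key

section mu
variable {p : ℕ} {Q : Set (Fin p → ℝ)} {F : Finset (Fin p → ℝ)}

lemma exists_mu (hQbin : Q ⊆ {z | ∀ i, z i = 0 ∨ z i = 1})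
    (hF : convexHull ℝ (Q \ {0}) =
        convexHull ℝ Q ∩ ⋂ π ∈ F, {z : Fin p → ℝ | 1 ≤ ∑ i, π i * z i})
    {z : Fin p → ℝ} (hz : z ∈ convexHull ℝ Q) :
    ∃ μ : ℝ, 0 ≤ μ ∧ μ ≤ 1 ∧ (∀ π ∈ F, μ ≤ ∑ i, π i * z i) ∧
      (μ = 0 → z = 0) ∧ (0 < μ → μ⁻¹ • z ∈ convexHull ℝ (Q \ {0})) ∧
      (μ < 1 → (0 : Fin p → ℝ) ∈ Q) := by
  classical
  have hz' := hz
  rw [convexHull_eq] at hz'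
  obtain ⟨ι, s, l, g, hl0, hl1, hgQ, hcm⟩ := hz'
  rw [Finset.centerMass_eq_of_sum_1 _ _ hl1] at hcm
  set sp : Finset ι := s.filter (fun k => g k ≠ 0) with hsp
  set μ : ℝ := ∑ k ∈ sp, l k with hμ
  have hspsub : sp ⊆ s := Finset.filter_subset _ _
  have hμ0 : 0 ≤ μ := Finset.sum_nonneg fun k hk => hl0 k (hspsub hk)
  have hμ1 : μ ≤ 1 := hl1 ▸ Finset.sum_le_sum_of_subset_of_nonneg hspsub
      (fun k hk _ => hl0 k hk)
  have hz2 : ∑ k ∈ sp, l k • g k = z := by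
    rw [← hcm, hsp]
    rw [← Finset.sum_filter_add_sum_filter_not s (fun k => g k ≠ 0) (fun k => l k • g k)]
    have : ∑ k ∈ s.filter (fun k => ¬ g k ≠ 0), l k • g k = 0 := by
      apply Finset.sum_eq_zero
      intro k hk
      have : g k = 0 := not_not.1 (Finset.mem_filter.1 hk).2
      simp [this]
    rw [this, add_zero]
  have hzero : μ = 0 → z = 0 := by
    intro h0
    rw [← hz2]
    apply Finset.sum_eq_zero
    intro k hk
    have : l k = 0 := by
      have := (Finset.sum_eq_zero_iff_of_nonneg (fun k hk => hl0 k (hspsub hk))).1 h0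
      exact this k hk
    simp [this]
  have hpos : 0 < μ → μ⁻¹ • z ∈ convexHull ℝ (Q \ {0}) := by
    intro h0
    have := Finset.centerMass_mem_convexHull (s := Q \ {0}) (w := l) (z := g) sp
      (fun k hk => hl0 k (hspsub hk)) (by rw [← hμ]; exact h0)
      (fun k hk => (⟨hgQ k (hspsub hk), (Finset.mem_filter.1 hk).2⟩ :
        g k ∈ Q \ {0}))
    rwa [Finset.centerMass, hz2, ← hμ] at this
  refine ⟨μ, hμ0, hμ1, ?_, hzero, hpos, ?_⟩
  · intro π hπ
    rcases hμ0.lt_or_eq with h0 | h0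
    · have hy := hpos h0
      rw [hF] at hy
      have h1 := hy.2
      simp only [Set.mem_iInter] at h1
      have h2 : 1 ≤ ∑ i, π i * (μ⁻¹ • z) i := h1 π hπ
      have h3 : ∑ i, π i * (μ⁻¹ • z) i = μ⁻¹ * ∑ i, π i * z i := by
        rw [Finset.mul_sum]
        apply Finset.sum_congr rfl
        intro i _
        simp [Pi.smul_apply]
        ring
      rw [h3] at h2
      calc μ = μ * 1 := (mul_one μ).symm
        _ ≤ μ * (μ⁻¹ * ∑ i, π i * z i) := by
            exact mul_le_mul_of_nonneg_left h2 hμ0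
        _ = ∑ i, π i * z i := by field_simp
    · rw [← h0]
      exact conv_pi_nonneg hQbin hF hπ hz
  · intro hμlt
    have hsum0 : 0 < ∑ k ∈ s.filter (fun k => ¬ g k ≠ 0), l k := by
      have hsplit : μ + ∑ k ∈ s.filter (fun k => ¬ g k ≠ 0), l k = 1 := by
        rw [hμ, hsp, Finset.sum_filter_add_sum_filter_not s _ l, hl1]
      linarith
    have : ∃ k ∈ s.filter (fun k => ¬ g k ≠ 0), l k ≠ 0 := by
      by_contra hcon
      push_neg at hcon
      have h0 : ∑ k ∈ s.filter (fun k => ¬ g k ≠ 0), l k = 0 :=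
        Finset.sum_eq_zero (fun k hk => hcon k (by simpa using hk))
      rw [h0] at hsum0
      exact lt_irrefl 0 hsum0
    obtain ⟨k, hk, -⟩ := this
    have h1 : g k = 0 := not_not.1 (Finset.mem_filter.1 hk).2
    have h2 : g k ∈ Q := hgQ k (Finset.mem_filter.1 hk).1
    rwa [h1] at h2

end mu

section dir2
open Filter
variable {p : ℕ} {Q : Set (Fin p → ℝ)} {f : ℝ → ℝ} {F : Finset (Fin p → ℝ)}

lemma tendsto_aux {z : ℝ} {w : ℕ → ℝ} {e : ℕ → ℝ} (he0 : ∀ n, 0 ≤ e n)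
    (heT : Tendsto e atTop (nhds 0)) (hw : ∀ n, |w n| ≤ 1) :
    Tendsto (fun n => (1 - e n) * z + e n * w n) atTop (nhds z) := by
  have hb : ∀ n, ‖(1 - e n) * z + e n * w n - z‖ ≤ (1 + |z|) * e n := by
    intro n
    have h1 : (1 - e n) * z + e n * w n - z = e n * (w n - z) := by ring
    rw [h1, Real.norm_eq_abs, abs_mul, abs_of_nonneg (he0 n)]
    have h2 : |w n - z| ≤ 1 + |z| := le_trans (abs_sub (w n) z) (by linarith [hw n])
    nlinarith [he0 n, abs_nonneg (w n - z)]
  have h0 : Tendsto (fun n => (1 + |z|) * e n) atTop (nhds 0) := by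
    simpa using heT.const_mul (1 + |z|)
  have h3 := squeeze_zero_norm hb h0
  have h4 := h3.add_const z
  simpa using h4

lemma dir2 (hQbin : Q ⊆ {z | ∀ i, z i = 0 ∨ z i = 1})
    (hf : ConvexOn ℝ Set.univ f) (hf0 : f 0 = 0)
    (hone : ∀ i, ∃ z ∈ Q, z i = 1)
    (hconn : (GQ p Q).Connected)
    (hF : convexHull ℝ (Q \ {0}) =
        convexHull ℝ Q ∩ ⋂ π ∈ F, {z : Fin p → ℝ | 1 ≤ ∑ i, π i * z i}) :
    {x : (Fin p → ℝ) × (Fin p → ℝ) × ℝ |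
        (∀ i, x.1 i ∈ Set.Icc (0 : ℝ) 1) ∧ x.1 ∈ convexHull ℝ Q ∧
        f (∑ i, x.2.1 i) ≤ x.2.2 ∧
        ∀ π ∈ F, persp f (∑ i, x.2.1 i) (∑ i, π i * x.1 i) ≤ (x.2.2 : EReal)}
      ⊆ closure (convexHull ℝ (ZQ p Q f)) := by
  have hnp : Nonempty (Fin p) := hconn.nonempty
  have hQne : Q.Nonempty := by
    obtain ⟨i⟩ := hnp
    obtain ⟨z, hz, -⟩ := hone i
    exact ⟨z, hz⟩
  rintro ⟨z, β, t⟩ ⟨hbox, hzQ, hft, hpersp⟩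
  simp only [Set.mem_setOf_eq] at hbox hzQ hft hpersp
  set s : ℝ := ∑ i, β i with hs
  -- the sequence of epsilons
  set e : ℕ → ℝ := fun n => 1 / ((n : ℝ) + 2) with he
  have he0 : ∀ n, 0 < e n := fun n => by positivity
  have he1 : ∀ n, e n < 1 := by
    intro n
    rw [he, div_lt_one (by positivity)]
    have : (0:ℝ) ≤ (n:ℝ) := Nat.cast_nonneg n
    linarith
  have heT : Tendsto e atTop (nhds 0) := by
    rw [he]
    have h1 : Tendsto (fun n : ℕ => ((n : ℝ) + 2)) atTop atTop :=
      tendsto_atTop_add_const_right atTop 2 tendsto_natCast_atTop_atTop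
    have h2 := h1.inv_tendsto_atTop
    simp only [one_div]
    exact h2
  obtain ⟨μ, hμ0, hμ1, hμπ, hμz, hμinv, hμQ⟩ := exists_mu hQbin hF hzQ
  set sC : Finset ℝ := insert (1:ℝ) (F.image fun π => ∑ i, π i * z i) with hsC
  have hsCne : sC.Nonempty := ⟨1, Finset.mem_insert_self _ _⟩
  set c : ℝ := sC.min' hsCne with hc
  have hc1 : c ≤ 1 := Finset.min'_le _ _ (Finset.mem_insert_self _ _)
  have hcπ : ∀ π ∈ F, c ≤ ∑ i, π i * z i := fun π hπ =>
    Finset.min'_le _ _ (Finset.mem_insert_of_mem (Finset.mem_image_of_mem _ hπ))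
  have hμc : μ ≤ c := by
    apply Finset.le_min'
    intro y hy
    rcases Finset.mem_insert.1 hy with rfl | hy
    · exact hμ1
    · obtain ⟨π, hπ, rfl⟩ := Finset.mem_image.1 hy
      exact hμπ π hπ
  have hc0 : 0 ≤ c := le_trans hμ0 hμc
  rcases hc0.lt_or_eq with hcpos | hczero
  · -- case c > 0
    have hy : c⁻¹ • z ∈ convexHull ℝ (Q \ {0}) := by
      by_cases hz0 : z = 0
      · rw [hF]
        constructor
        · rw [hz0, smul_zero]
          rw [hz0] at hzQ
          exact hzQ
        · simp only [Set.mem_iInter]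
          intro π hπ
          exfalso
          have h1 := hcπ π hπ
          rw [hz0] at h1
          simp only [Pi.zero_apply, mul_zero, Finset.sum_const_zero] at h1
          linarith
      · have hμpos : 0 < μ := by
          rcases hμ0.lt_or_eq with h | h
          · exact h
          · exact absurd (hμz h.symm) hz0
        have hy0 : μ⁻¹ • z ∈ convexHull ℝ (Q \ {0}) := hμinv hμpos
        have hy0' : μ⁻¹ • z ∈ convexHull ℝ Q := convexHull_mono Set.diff_subset hy0
        have hconvQ : c⁻¹ • z ∈ convexHull ℝ Q := by
          by_cases hμone : μ = 1
          · have hcone : c = 1 := le_antisymm hc1 (hμone ▸ hμc)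
            rw [hcone]
            simpa using hzQ
          · have hμlt : μ < 1 := lt_of_le_of_ne hμ1 hμone
            have hμinv1 : 1 < μ⁻¹ := (one_lt_inv₀ hμpos).2 hμlt
            have hcinv1 : 1 ≤ c⁻¹ := one_le_inv₀ hcpos |>.2 hc1
            have hcinvμ : c⁻¹ ≤ μ⁻¹ := by
              apply inv_anti₀ hμpos hμc
            set θ : ℝ := (μ⁻¹ - c⁻¹) / (μ⁻¹ - 1) with hθ
            have hθ0 : 0 ≤ θ := div_nonneg (by linarith) (by linarith)
            have hθ1 : θ ≤ 1 := by
              rw [hθ, div_le_one (by linarith)]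
              linarith
            have hcomb := (convex_convexHull ℝ Q) hzQ hy0' hθ0 (by linarith : (0:ℝ) ≤ 1 - θ)
              (by ring)
            have heq : θ • z + (1 - θ) • (μ⁻¹ • z) = c⁻¹ • z := by
              rw [smul_smul, ← add_smul]
              congr 1
              have hμne : μ⁻¹ - 1 ≠ 0 := by linarith
              have hgen : ∀ a b : ℝ, a - 1 ≠ 0 → (a - b)/(a - 1) + (1 - (a - b)/(a - 1)) * a = b := by
                intro a b hone'
                field_simp
                ring
              exact hgen μ⁻¹ c⁻¹ hμne
            rwa [heq] at hcomb
        rw [hF]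
        refine ⟨hconvQ, ?_⟩
        simp only [Set.mem_iInter]
        intro π hπ
        show 1 ≤ ∑ i, π i * (c⁻¹ • z) i
        have h3 : ∑ i, π i * (c⁻¹ • z) i = c⁻¹ * ∑ i, π i * z i := by
          rw [Finset.mul_sum]
          apply Finset.sum_congr rfl
          intro i _
          simp only [Pi.smul_apply, smul_eq_mul]
          ring
        rw [h3]
        calc (1:ℝ) = c⁻¹ * c := by field_simp
          _ ≤ c⁻¹ * ∑ i, π i * z i :=
            mul_le_mul_of_nonneg_left (hcπ π hπ) (by positivity)
    have h0Qc : c < 1 → (0 : Fin p → ℝ) ∈ Q := fun h => hμQ (lt_of_le_of_lt hμc h)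
    have hcf : c * f (c⁻¹ * s) ≤ t := by
      have hcmem : c ∈ insert (1:ℝ) (F.image fun π => ∑ i, π i * z i) :=
        Finset.min'_mem sC hsCne
      rcases Finset.mem_insert.1 hcmem with h | h
      · rw [h]
        simpa using hft
      · obtain ⟨π₀, hπ₀, hval⟩ := Finset.mem_image.1 h
        have hp := hpersp π₀ hπ₀
        rw [hval] at hp
        rw [persp_of_pos hcpos, EReal.coe_le_coe_iff] at hp
        rw [show c⁻¹ * s = s / c by rw [div_eq_inv_mul]]
        exact hp
    -- per-n construction
    set tε : ℕ → ℝ := fun n => max t ((1 - e n) * c * f ((c⁻¹ * s) / (1 - e n))) with htε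
    have hkey : ∀ n : ℕ, ∃ ζ, ζ ∈ convexHull ℝ Q ∧
        (((1 - e n) • z + (c * e n) • ζ, β, tε n) :
          (Fin p → ℝ) × (Fin p → ℝ) × ℝ) ∈ convexHull ℝ (ZQ p Q f) := by
      intro n
      have hσK : ∑ i, (c⁻¹ • β) i = c⁻¹ * s := by
        simp only [Pi.smul_apply, smul_eq_mul, ← Finset.mul_sum, hs]
      have hhyp : (1 - e n) * f ((∑ i, (c⁻¹ • β) i) / (1 - e n)) ≤ tε n / c := by
        rw [hσK, le_div_iff₀ hcpos]
        have h1 : (1 - e n) * c * f ((c⁻¹ * s) / (1 - e n)) ≤ tε n :=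
          le_max_right _ _
        have heq2 : (1 - e n) * f ((c⁻¹ * s) / (1 - e n)) * c
            = (1 - e n) * c * f ((c⁻¹ * s) / (1 - e n)) := by ring
        rw [heq2]
        exact h1
      obtain ⟨ζ, hζ, hk⟩ := key_lemma hQbin hf0 hQne hconn hy (c⁻¹ • β) (tε n / c)
        (he0 n) (he1 n) hhyp
      refine ⟨ζ, hζ, ?_⟩
      by_cases hcone : c = 1
      · rw [hcone] at hk ⊢
        simpa using hk
      · have h0Q : (0 : Fin p → ℝ) ∈ Q := h0Qc (lt_of_le_of_ne hc1 hcone)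
        have hP0 : ((0, 0, 0) : (Fin p → ℝ) × (Fin p → ℝ) × ℝ) ∈ ZQ p Q f := by
          refine ⟨h0Q, by simp [hf0], fun i => by simp⟩
        have hcomb := (convex_convexHull ℝ (ZQ p Q f)) hk
          (subset_convexHull ℝ _ hP0) hc0 (by linarith : (0:ℝ) ≤ 1 - c) (by ring)
        convert hcomb using 1
        refine Prod.ext ?_ (Prod.ext ?_ ?_)
        · funext i
          simp only [Prod.fst_add, Prod.smul_fst, Pi.add_apply, Pi.smul_apply,
            smul_eq_mul, Pi.zero_apply, mul_zero, add_zero]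
          field_simp
        · funext i
          simp only [Prod.snd_add, Prod.fst_add, Prod.smul_snd, Prod.smul_fst,
            Pi.add_apply, Pi.smul_apply, smul_eq_mul, Pi.zero_apply, mul_zero, add_zero]
          field_simp
        · simp only [Prod.snd_add, Prod.smul_snd, smul_eq_mul, mul_zero, add_zero]
          field_simp
    choose ζ hζ hmem using hkey
    apply mem_closure_of_tendsto (f := fun n =>
      (((1 - e n) • z + (c * e n) • ζ n, β, tε n) :
        (Fin p → ℝ) × (Fin p → ℝ) × ℝ)) (b := atTop)
    · -- tendsto
      refine Tendsto.prodMk_nhds ?_ (Tendsto.prodMk_nhds tendsto_const_nhds ?_)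
      · rw [tendsto_pi_nhds]
        intro i
        have hwb : ∀ n, |c * ζ n i| ≤ 1 := by
          intro n
          have hbx := conv_mem_box hQbin (hζ n) i
          rw [abs_of_nonneg (mul_nonneg hc0 hbx.1)]
          calc c * ζ n i ≤ 1 * 1 := by
                apply mul_le_mul hc1 hbx.2 hbx.1 zero_le_one
            _ = 1 := by norm_num
        have := tendsto_aux (z := z i) (fun n => (he0 n).le) heT hwb
        refine this.congr ?_
        intro n
        simp only [Pi.add_apply, Pi.smul_apply, smul_eq_mul]
        ring
      · -- t component
        have h1e : Tendsto (fun n => 1 - e n) atTop (nhds 1) := by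
          have h := Tendsto.const_sub (1:ℝ) heT
          simpa using h
        have harg : Tendsto (fun n => (c⁻¹ * s) / (1 - e n)) atTop (nhds ((c⁻¹ * s) / 1)) :=
          tendsto_const_nhds.div h1e one_ne_zero
        have hfc : Tendsto (fun n => f ((c⁻¹ * s) / (1 - e n))) atTop (nhds (f ((c⁻¹ * s) / 1))) :=
          ((fcont hf).tendsto _).comp harg
        have hmul : Tendsto (fun n => (1 - e n) * c * f ((c⁻¹ * s) / (1 - e n))) atTop
            (nhds (1 * c * f ((c⁻¹ * s) / 1))) :=
          (h1e.mul tendsto_const_nhds).mul hfc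
        have hmax : Tendsto tε atTop (nhds (max t (1 * c * f ((c⁻¹ * s) / 1)))) :=
          tendsto_const_nhds.max hmul
        have heqmax : max t (1 * c * f ((c⁻¹ * s) / 1)) = t := by
          rw [one_mul, div_one]
          exact max_eq_left hcf
        rwa [heqmax] at hmax
    · exact Filter.Eventually.of_forall hmem
  · -- case c = 0
    have hμzero : μ = 0 := le_antisymm (hczero ▸ hμc) hμ0
    have hz0 : z = 0 := hμz hμzero
    have h0Q : (0 : Fin p → ℝ) ∈ Q := hμQ (by rw [hμzero]; norm_num)
    -- find π₀ with value 0
    have hcmem : c ∈ insert (1:ℝ) (F.image fun π => ∑ i, π i * z i) :=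
      Finset.min'_mem sC hsCne
    rcases Finset.mem_insert.1 hcmem with h | h
    · exfalso
      rw [← hczero] at h
      norm_num at h
    · obtain ⟨π₀, hπ₀, hval⟩ := Finset.mem_image.1 h
      rw [← hczero] at hval
      have hv : ∀ v : ℝ, 0 < v → v * f (s / v) ≤ t := by
        have hp := hpersp π₀ hπ₀
        rw [hval] at hp
        exact (persp_zero_le_iff hf hf0).1 hp
      -- nonzero element of Q
      obtain ⟨i₀⟩ := hnp
      obtain ⟨zs, hzsQ, hzs1⟩ := hone i₀
      have hzsne : zs ≠ 0 := by
        intro hcon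
        rw [hcon] at hzs1
        simp at hzs1
      have hys : zs ∈ convexHull ℝ (Q \ {0}) := subset_convexHull ℝ _ ⟨hzsQ, hzsne⟩
      have hkey : ∀ n : ℕ, ∃ ζ, ζ ∈ convexHull ℝ Q ∧
          ((((e n / 2) • zs + (e n / 2) • ζ, β, t)) :
            (Fin p → ℝ) × (Fin p → ℝ) × ℝ) ∈ convexHull ℝ (ZQ p Q f) := by
        intro n
        set Bn : Fin p → ℝ := (e n)⁻¹ • β with hBn
        set un : ℝ := (1 - (2⁻¹ : ℝ)) * f ((∑ i, Bn i) / (1 - (2⁻¹ : ℝ))) with hun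
        obtain ⟨ζ, hζ, hk⟩ := key_lemma hQbin hf0 hQne hconn hys Bn un
          (by norm_num : (0:ℝ) < 2⁻¹) (by norm_num) (le_refl _)
        have hσn : ∑ i, Bn i = (e n)⁻¹ * s := by
          simp only [hBn, Pi.smul_apply, smul_eq_mul, ← Finset.mul_sum, hs]
        have hεu : e n * un ≤ t := by
          have h1 : e n * un = (e n / 2) * f (s / (e n / 2)) := by
            rw [hun, hσn]
            have hne : e n ≠ 0 := (he0 n).ne'
            have harg : ((e n)⁻¹ * s) / (1 - (2⁻¹:ℝ)) = s / (e n / 2) := by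
              have h2 : (1 - (2⁻¹:ℝ)) = 2⁻¹ := by norm_num
              rw [h2, div_eq_div_iff (by norm_num) (by positivity)]
              field_simp
            rw [harg]
            ring
          rw [h1]
          exact hv (e n / 2) (by positivity)
        set t0 : ℝ := (t - e n * un) / (1 - e n) with ht0
        have hP0 : (((0 : Fin p → ℝ), (0 : Fin p → ℝ), t0) :
            (Fin p → ℝ) × (Fin p → ℝ) × ℝ) ∈ ZQ p Q f := by
          refine ⟨h0Q, ?_, fun i => by simp⟩
          have : (0:ℝ) ≤ t0 := div_nonneg (by linarith) (by linarith [he1 n])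
          simpa [hf0] using this
        have hcomb := (convex_convexHull ℝ (ZQ p Q f))
          (subset_convexHull ℝ _ hP0) hk
          (by linarith [he1 n] : (0:ℝ) ≤ 1 - e n) (he0 n).le (by ring)
        refine ⟨ζ, hζ, ?_⟩
        convert hcomb using 1
        refine Prod.ext ?_ (Prod.ext ?_ ?_)
        · funext i
          simp only [Prod.fst_add, Prod.smul_fst, Pi.add_apply, Pi.smul_apply,
            smul_eq_mul, Pi.zero_apply, mul_zero, zero_add]
          ring
        · funext i
          simp only [Prod.snd_add, Prod.fst_add, Prod.smul_snd, Prod.smul_fst,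
            Pi.add_apply, Pi.smul_apply, smul_eq_mul, Pi.zero_apply, mul_zero, zero_add,
            hBn]
          field_simp
          exact (mul_div_cancel_right₀ _ (he0 n).ne').symm
        · simp only [Prod.snd_add, Prod.smul_snd, smul_eq_mul, ht0]
          have h1en : (1:ℝ) - e n ≠ 0 := ne_of_gt (by linarith [he1 n])
          field_simp
          ring
      choose ζ hζ hmem2 using hkey
      apply mem_closure_of_tendsto (f := fun n =>
        ((((e n / 2) • zs + (e n / 2) • ζ n, β, t)) :
          (Fin p → ℝ) × (Fin p → ℝ) × ℝ)) (b := atTop)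
      · refine Tendsto.prodMk_nhds ?_ (Tendsto.prodMk_nhds tendsto_const_nhds
          tendsto_const_nhds)
        rw [tendsto_pi_nhds]
        intro i
        rw [hz0]
        have hwb : ∀ n, |(zs i + ζ n i) / 2| ≤ 1 := by
          intro n
          have hbx := conv_mem_box hQbin (hζ n) i
          have hbz : zs i = 0 ∨ zs i = 1 := hQbin hzsQ i
          rw [abs_of_nonneg (by rcases hbz with h | h <;> rw [h] <;> linarith [hbx.1])]
          rcases hbz with h | h <;> rw [h] <;> linarith [hbx.2]
        have := tendsto_aux (z := (0:ℝ)) (fun n => (he0 n).le) heT hwb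
        simp only [mul_zero, Pi.zero_apply] at this ⊢
        refine this.congr ?_
        intro n
        simp only [Pi.add_apply, Pi.smul_apply, smul_eq_mul]
        ring
      · exact Filter.Eventually.of_forall hmem2

end dir2

/-- Theorem: the connected case: if `G_Q` is connected then
`clconv(Z_Q)` is described by `z ∈ conv(Q)`, `t ≥ f(𝟙ᵀβ)` and the inequalities
`t ≥ (πᵀz)·f(𝟙ᵀβ/(πᵀz))`, `π ∈ F`. -/
theorem statement3 (p : ℕ) (Q : Set (Fin p → ℝ))
    (hQbin : Q ⊆ {z | ∀ i, z i = 0 ∨ z i = 1})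
    (f : ℝ → ℝ) (hf : ConvexOn ℝ Set.univ f) (hf0 : f 0 = 0)
    (hone : ∀ i, ∃ z ∈ Q, z i = 1)
    (hconn : (GQ p Q).Connected)
    (F : Finset (Fin p → ℝ))
    (hF : convexHull ℝ (Q \ {0}) =
        convexHull ℝ Q ∩ ⋂ π ∈ F, {z : Fin p → ℝ | 1 ≤ ∑ i, π i * z i}) :
    closure (convexHull ℝ (ZQ p Q f)) =
      {x : (Fin p → ℝ) × (Fin p → ℝ) × ℝ |
        (∀ i, x.1 i ∈ Set.Icc (0 : ℝ) 1) ∧ x.1 ∈ convexHull ℝ Q ∧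
        f (∑ i, x.2.1 i) ≤ x.2.2 ∧
        ∀ π ∈ F, persp f (∑ i, x.2.1 i) (∑ i, π i * x.1 i) ≤ (x.2.2 : EReal)} := by
  apply Set.Subset.antisymm
  · exact dir1 hQbin hf hf0 hF
  · exact dir2 hQbin hf hf0 hone hconn hF
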